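/- Every 1-cocycle δ : Sp(2n,ℤ) → ℤ^{2n} is a coboundary for n ≥ 2, i.e., H¹(Sp(2n,ℤ), ℤ^{2n}) = 0. -/
import Mathlib

open Matrix

/-- The upper unitriangular block matrix `[[1,1],[0,1]]` is symplectic. -/
lemma sp_upper_mem {n : ℕ} :
    Matrix.fromBlocks 1 1 0 1 ∈ Matrix.symplecticGroup (Fin n) ℤ := by
  rw [SymplecticGroup.mem_iff]
  simp [Matrix.J, Matrix.fromBlocks_multiply, Matrix.fromBlocks_transpose]

/-- The lower unitriangular block matrix `[[1,0],[1,1]]` is symplectic. -/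
lemma sp_lower_mem {n : ℕ} :
    Matrix.fromBlocks 1 0 1 1 ∈ Matrix.symplecticGroup (Fin n) ℤ := by
  rw [SymplecticGroup.mem_iff]
  simp [Matrix.J, Matrix.fromBlocks_multiply, Matrix.fromBlocks_transpose]

/-- For `n ≥ 2`, every 1-cocycle `δ : Sp(2n,ℤ) → ℤ^{2n}` is a coboundary:
`H¹(Sp(2n,ℤ), ℤ^{2n}) = 0`. -/
theorem sp_cocycle_is_coboundary {n : ℕ} (hn : 2 ≤ n)
    (δ : Matrix (Fin n ⊕ Fin n) (Fin n ⊕ Fin n) ℤ → ((Fin n ⊕ Fin n) → ℤ))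
    (hcoc : ∀ g h, g ∈ Matrix.symplecticGroup (Fin n) ℤ →
      h ∈ Matrix.symplecticGroup (Fin n) ℤ → δ (g * h) = δ g + g.mulVec (δ h)) :
    ∃ y : (Fin n ⊕ Fin n) → ℤ, ∀ g ∈ Matrix.symplecticGroup (Fin n) ℤ,
      δ g = y - g.mulVec y := by
  have h1 : (1 : Matrix (Fin n ⊕ Fin n) (Fin n ⊕ Fin n) ℤ) ∈
      Matrix.symplecticGroup (Fin n) ℤ := (Matrix.symplecticGroup (Fin n) ℤ).one_mem
  have hneg : (-1 : Matrix (Fin n ⊕ Fin n) (Fin n ⊕ Fin n) ℤ) ∈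
      Matrix.symplecticGroup (Fin n) ℤ := SymplecticGroup.neg_mem h1
  set w : (Fin n ⊕ Fin n) → ℤ := δ (-1) with hw
  -- key identity: 2 • δ g = w - g *ᵥ w for any symplectic g
  have key : ∀ g ∈ Matrix.symplecticGroup (Fin n) ℤ,
      (2 : ℤ) • δ g = w - g.mulVec w := by
    intro g hg
    have e1 := hcoc g (-1) hg hneg
    have e2 := hcoc (-1) g hneg hg
    rw [mul_neg_one] at e1
    rw [neg_one_mul] at e2
    rw [e2] at e1
    have : δ g + δ g = w - g.mulVec w := by
      have hmv : (-1 : Matrix (Fin n ⊕ Fin n) (Fin n ⊕ Fin n) ℤ).mulVec (δ g)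
          = - δ g := by
        rw [Matrix.neg_mulVec, Matrix.one_mulVec]
      rw [hmv] at e1
      -- e1 : w + -δ g = δ g + g *ᵥ w
      funext i
      have := congrFun e1 i
      simp only [Pi.add_apply, Pi.neg_apply, Pi.sub_apply] at this ⊢
      linarith
    rw [two_smul]; exact this
  -- evenness of w
  have heven : ∀ i, (2 : ℤ) ∣ w i := by
    have hdecomp : w = Sum.elim (w ∘ Sum.inl) (w ∘ Sum.inr) := by
      funext i; cases i <;> rfl
    intro i
    cases i with
    | inl k =>
      have hL := key _ sp_lower_mem
      have := congrFun hL (Sum.inr k)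
      rw [hdecomp, Matrix.fromBlocks_mulVec] at this
      simp only [Matrix.one_mulVec, Matrix.zero_mulVec, add_zero, zero_add,
        Pi.smul_apply, Pi.sub_apply, Sum.elim_inr, Sum.elim_inl, Pi.add_apply,
        Function.comp_apply, smul_eq_mul] at this
      -- this : 2 * δ L (inr k) = w (inr k) - (w (inl k) + w (inr k))
      exact ⟨-(δ (Matrix.fromBlocks 1 0 1 1) (Sum.inr k)), by linarith⟩
    | inr k =>
      have hU := key _ sp_upper_mem
      have := congrFun hU (Sum.inl k)
      rw [hdecomp, Matrix.fromBlocks_mulVec] at this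
      simp only [Matrix.one_mulVec, Matrix.zero_mulVec, add_zero, zero_add,
        Pi.smul_apply, Pi.sub_apply, Sum.elim_inr, Sum.elim_inl, Pi.add_apply,
        Function.comp_apply, smul_eq_mul] at this
      exact ⟨-(δ (Matrix.fromBlocks 1 1 0 1) (Sum.inl k)), by linarith⟩
  choose y hy using heven
  refine ⟨y, fun g hg => ?_⟩
  have hwy : w = fun i => 2 * y i := by funext i; exact hy i
  have hk := key g hg
  funext i
  have := congrFun hk i
  simp only [Pi.smul_apply, Pi.sub_apply, smul_eq_mul] at this
  have hwy2 : w = (2 : ℤ) • y := by funext i; simpa using hy i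
  rw [hwy2, Matrix.mulVec_smul] at this
  simp only [Pi.smul_apply, Pi.sub_apply, smul_eq_mul] at this ⊢
  linarith
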